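/- (EDRS early-termination correctness.) Let n ≥ 1 and let r_1, …, r_n be routes with Euclidean distances ED_1 ≤ ED_2 ≤ … ≤ ED_n (sorted nondecreasingly) and graph distances GD_1, …, GD_n satisfying GD_i ≥ ED_i for every i. Suppose for some index j with 1 < j ≤ n the current minimum GD_s := min_{1 ≤ i < j} GD_i satisfies GD_s ≤ ED_j. Then GD_s = min_{1 ≤ i ≤ n} GD_i; that is, the smallest graph distance found among the first j-1 routes is the smallest graph distance among all n routes. -/
import Mathlib


/-- EDRS early-termination correctness: routes `1, …, n` are sorted by nondecreasing
Euclidean distance `ED`, each graph distance `GD i` dominates `ED i`. If at some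
index `1 < j ≤ n` the minimum graph distance `GD_s` among the first `j - 1` routes
satisfies `GD_s ≤ ED j`, then `GD_s` is the minimum graph distance among all `n`
routes. -/
theorem edrs_early_termination
    (n : ℕ) (hn : 1 ≤ n) (ED GD : ℕ → ℝ)
    (hsorted : ∀ i j : ℕ, 1 ≤ i → i ≤ j → j ≤ n → ED i ≤ ED j)
    (hge : ∀ i : ℕ, 1 ≤ i → i ≤ n → ED i ≤ GD i)
    (j : ℕ) (hj1 : 1 < j) (hjn : j ≤ n)
    (hstop : (Finset.Icc 1 (j - 1)).inf' (Finset.nonempty_Icc.mpr (by omega)) GD ≤ ED j) :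
    (Finset.Icc 1 (j - 1)).inf' (Finset.nonempty_Icc.mpr (by omega)) GD =
      (Finset.Icc 1 n).inf' (Finset.nonempty_Icc.mpr (by omega)) GD := by
  apply le_antisymm
  · rw [Finset.le_inf'_iff]
    intro i hi
    simp only [Finset.mem_Icc] at hi
    by_cases h : i ≤ j - 1
    · exact Finset.inf'_le _ (Finset.mem_Icc.mpr ⟨hi.1, h⟩)
    · calc _ ≤ ED j := hstop
        _ ≤ ED i := hsorted j i (by omega) (by omega) hi.2
        _ ≤ GD i := hge i hi.1 hi.2
  · exact Finset.inf'_mono _ (Finset.Icc_subset_Icc le_rfl (by omega)) _
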